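/- Let w, w̃ be weight functions on V and α ≥ 0. A nonempty subset σ of the vertex set of Ĝ^{w,w̃} is a simplex of R_α(Ĝ^{w,w̃}) if and only if σ has one of the following three forms, where i_1 < … < i_n are indices in {1,…,N}: (1) {A_{i_1},…,A_{i_k}, A'_{i_k},…,A'_{i_n}} with 1 ≤ k ≤ n, subject to w_{A_{i_r}A_{i_s}} ≤ α whenever r < s and r ≤ k, and min(w_{A_{i_r}A_{i_s}}, w̃_{A_{i_r}A_{i_s}}) ≤ α whenever k ≤ r < s; (2) {A_{i_1},…,A_{i_{k-1}}, A'_{i_k},…,A'_{i_n}} with 1 ≤ k ≤ n+1, subject to w_{A_{i_r}A_{i_s}} ≤ α whenever r < s and r ≤ k−1, and min(w_{A_{i_r}A_{i_s}}, w̃_{A_{i_r}A_{i_s}}) ≤ α whenever k ≤ r < s; (3) {O, A_{i_1},…,A_{i_n}} with w_{A_{i_r}A_{i_s}} ≤ α for all r < s. -/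

import Mathlib

open scoped ENNReal
noncomputable section
attribute [local instance] Classical.propDecidable

namespace RTD

/-- The linear map between ℤ/2-spaces of chains given by an explicit coefficient matrix. -/
def lmap {ι κ : Type*} [Fintype ι] (M : ι → κ → ZMod 2) :
    (ι → ZMod 2) →ₗ[ZMod 2] (κ → ZMod 2) where
  toFun f k := ∑ i, M i k * f i
  map_add' f g := by
    funext k
    simp [mul_add, Finset.sum_add_distrib]
  map_smul' c f := by
    funext k
    simp only [Pi.smul_apply, smul_eq_mul, RingHom.id_apply, Finset.mul_sum]
    exact Finset.sum_congr rfl fun i _ => by ring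

variable {U : Type*}

/-- Simplexes of the Vietoris–Rips complex at threshold `α` having `n` vertices.
For `n = 0` this is the empty set, serving as the augmentation generator, so that
position `n` of the augmented chain complex corresponds to homological degree `n - 1`. -/
abbrev Simp [Fintype U] (d : U → U → ℝ≥0∞) (α : ℝ) (n : ℕ) :=
  {σ : Finset U // σ.card = n ∧ ∀ x ∈ σ, ∀ y ∈ σ, x ≠ y → d x y ≤ ENNReal.ofReal α}

/-- Position-`n` chains (over ℤ/2) of the augmented chain complex of the Vietoris–Rips complex. -/
abbrev Ch [Fintype U] (d : U → U → ℝ≥0∞) (α : ℝ) (n : ℕ) := Simp d α n → ZMod 2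

/-- The boundary operator of the augmented chain complex (over ℤ/2 all signs are 1);
the coefficient of `τ` in `∂ σ` is 1 exactly when `τ ⊂ σ`. -/
def bdry [Fintype U] (d : U → U → ℝ≥0∞) (α : ℝ) (n : ℕ) :
    Ch d α (n + 1) →ₗ[ZMod 2] Ch d α n :=
  lmap fun σ τ => if τ.1 ⊆ σ.1 then 1 else 0

def cycles [Fintype U] (d : U → U → ℝ≥0∞) (α : ℝ) :
    (n : ℕ) → Submodule (ZMod 2) (Ch d α n)
  | 0 => ⊤
  | n + 1 => LinearMap.ker (bdry d α n)

/-- Homology of the augmented chain complex at position `n`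
(i.e. reduced homology in degree `n - 1`). -/
abbrev homologyAt [Fintype U] (d : U → U → ℝ≥0∞) (α : ℝ) (n : ℕ) :=
  cycles d α n ⧸ Submodule.comap (cycles d α n).subtype (LinearMap.range (bdry d α n))

/-- Reduced simplicial ℤ/2 homology `H_i`, `i ≥ 0`, of the Vietoris–Rips complex. -/
abbrev Hred [Fintype U] (d : U → U → ℝ≥0∞) (α : ℝ) (i : ℕ) := homologyAt d α (i + 1)

/-- `σ` is a simplex of the Vietoris–Rips complex at threshold `α`. -/
def IsVR [Fintype U] (d : U → U → ℝ≥0∞) (α : ℝ) (σ : Finset U) : Prop :=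
  σ.Nonempty ∧ ∀ x ∈ σ, ∀ y ∈ σ, x ≠ y → d x y ≤ ENNReal.ofReal α

end RTD
namespace RTD

/-- Weight functions take extended nonnegative real values; `wmin` is the pointwise minimum. -/
def wmin {N : ℕ} (w wt : Fin N → Fin N → ℝ≥0∞) : Fin N → Fin N → ℝ≥0∞ :=
  fun i j => min (w i j) (wt i j)

/-- Vertices of the graph Ĝ^{w,w̃}: the vertices `A_i` (`.inl (.inl i)`),
their copies `A'_i` (`.inl (.inr i)`), and the extra vertex `O` (`.inr ()`). -/
abbrev VH (N : ℕ) := (Fin N ⊕ Fin N) ⊕ Unit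

/-- The edge weights of the weighted graph Ĝ^{w,w̃} (values on the diagonal are irrelevant). -/
def dhat {N : ℕ} (w wt : Fin N → Fin N → ℝ≥0∞) : VH N → VH N → ℝ≥0∞
  | Sum.inl (Sum.inl i), Sum.inl (Sum.inl j) => w i j
  | Sum.inl (Sum.inl i), Sum.inl (Sum.inr j) =>
      if i < j then w i j else if i = j then 0 else ⊤
  | Sum.inl (Sum.inr i), Sum.inl (Sum.inl j) =>
      if j < i then w j i else if j = i then 0 else ⊤
  | Sum.inl (Sum.inr i), Sum.inl (Sum.inr j) => if i = j then 0 else min (w i j) (wt i j)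
  | Sum.inl (Sum.inl _), Sum.inr _ => 0
  | Sum.inr _, Sum.inl (Sum.inl _) => 0
  | Sum.inl (Sum.inr _), Sum.inr _ => ⊤
  | Sum.inr _, Sum.inl (Sum.inr _) => ⊤
  | Sum.inr _, Sum.inr _ => 0

/-- The set of unprimed vertices `A_i`, `i ∈ s`, of Ĝ^{w,w̃}. -/
def unp {N : ℕ} (s : Finset (Fin N)) : Finset (VH N) :=
  s.image fun i => Sum.inl (Sum.inl i)

/-- The set of primed vertices `A'_i`, `i ∈ s`, of Ĝ^{w,w̃}. -/
def prm {N : ℕ} (s : Finset (Fin N)) : Finset (VH N) :=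
  s.image fun i => Sum.inl (Sum.inr i)

/-- The extra vertex `O` of Ĝ^{w,w̃}. -/
def vO {N : ℕ} : VH N := Sum.inr ()

/-- The indices `i` with `A_i ∈ τ`. -/
def uIdx {N : ℕ} (τ : Finset (VH N)) : Finset (Fin N) :=
  Finset.univ.filter fun i => Sum.inl (Sum.inl i) ∈ τ

/-- The indices `i` with `A'_i ∈ τ`. -/
def pIdx {N : ℕ} (τ : Finset (VH N)) : Finset (Fin N) :=
  Finset.univ.filter fun i => Sum.inl (Sum.inr i) ∈ τ

end RTD

namespace RTD

lemma dhat_AA {N : ℕ} (w wt : Fin N → Fin N → ℝ≥0∞) (i j : Fin N) :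
    dhat w wt (Sum.inl (Sum.inl i)) (Sum.inl (Sum.inl j)) = w i j := rfl

lemma dhat_AP {N : ℕ} (w wt : Fin N → Fin N → ℝ≥0∞) (i j : Fin N) :
    dhat w wt (Sum.inl (Sum.inl i)) (Sum.inl (Sum.inr j)) =
      if i < j then w i j else if i = j then 0 else ⊤ := rfl

lemma dhat_PA {N : ℕ} (w wt : Fin N → Fin N → ℝ≥0∞) (i j : Fin N) :
    dhat w wt (Sum.inl (Sum.inr i)) (Sum.inl (Sum.inl j)) =
      if j < i then w j i else if j = i then 0 else ⊤ := rfl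

lemma dhat_PP {N : ℕ} (w wt : Fin N → Fin N → ℝ≥0∞) (i j : Fin N) :
    dhat w wt (Sum.inl (Sum.inr i)) (Sum.inl (Sum.inr j)) =
      if i = j then 0 else min (w i j) (wt i j) := rfl

lemma dhat_OP {N : ℕ} (w wt : Fin N → Fin N → ℝ≥0∞) (i : Fin N) :
    dhat w wt vO (Sum.inl (Sum.inr i)) = ⊤ := rfl

lemma isVR_aux {N : ℕ} {w wt : Fin N → Fin N → ℝ≥0∞}
    (hw : ∀ i j, w i j = w j i) (hwt : ∀ i j, wt i j = wt j i) {α : ℝ}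
    {s p : Finset (Fin N)} (hne : (s ∪ p).Nonempty)
    (hle : ∀ a ∈ s, ∀ b ∈ p, a ≤ b)
    (h1 : ∀ a ∈ s, ∀ b ∈ s ∪ p, a < b → w a b ≤ ENNReal.ofReal α)
    (h2 : ∀ a ∈ p, ∀ b ∈ p, a < b → min (w a b) (wt a b) ≤ ENNReal.ofReal α) :
    IsVR (dhat w wt) α (unp s ∪ prm p) := by
  constructor
  · obtain ⟨a, ha⟩ := hne
    rcases Finset.mem_union.1 ha with h | h
    · exact ⟨_, Finset.mem_union_left _ (Finset.mem_image_of_mem _ h)⟩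
    · exact ⟨_, Finset.mem_union_right _ (Finset.mem_image_of_mem _ h)⟩
  · intro x hx y hy hxy
    simp only [unp, prm, Finset.mem_union, Finset.mem_image] at hx hy
    rcases hx with ⟨i, hi, rfl⟩ | ⟨i, hi, rfl⟩ <;>
      rcases hy with ⟨j, hj, rfl⟩ | ⟨j, hj, rfl⟩
    · have hij : i ≠ j := by simpa using hxy
      rw [dhat_AA]
      rcases hij.lt_or_gt with h | h
      · exact h1 i hi j (Finset.mem_union_left _ hj) h
      · rw [hw]; exact h1 j hj i (Finset.mem_union_left _ hi) h
    · rw [dhat_AP]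
      rcases (hle i hi j hj).lt_or_eq with h | h
      · rw [if_pos h]; exact h1 i hi j (Finset.mem_union_right _ hj) h
      · rw [if_neg (by simp [h]), if_pos h]; exact zero_le
    · rw [dhat_PA]
      rcases (hle j hj i hi).lt_or_eq with h | h
      · rw [if_pos h]; exact h1 j hj i (Finset.mem_union_right _ hi) h
      · rw [if_neg (by simp [h]), if_pos h]; exact zero_le
    · have hij : i ≠ j := by simpa using hxy
      rw [dhat_PP, if_neg hij]
      rcases hij.lt_or_gt with h | h
      · exact h2 i hi j hj h
      · rw [hw, hwt]; exact h2 j hj i hi h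

/-- **Characterization of the simplexes of `R_α(Ĝ^{w,w̃})`.**  A nonempty subset `σ` of the
vertex set of `Ĝ^{w,w̃}` is a simplex of the Vietoris–Rips complex `R_α(Ĝ^{w,w̃})` if and
only if it has one of the following three forms (here `s`, `p` are the sets of indices of
the unprimed and primed vertices of `σ`):
(1) `{A_{i_1},…,A_{i_k}, A'_{i_k},…,A'_{i_n}}` with `1 ≤ k ≤ n`, i.e. `s` and `p` are
nonempty and share exactly the element `m = max s = min p`, subject to
`w_{A_{i_r}A_{i_s}} ≤ α` whenever `r < s` and `r ≤ k` (i.e. for every pair `a < b` of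
indices of `σ` whose smaller member `a` lies in `s`), and
`min(w_{A_{i_r}A_{i_s}}, w̃_{A_{i_r}A_{i_s}}) ≤ α` whenever `k ≤ r < s` (i.e. for every
pair `a < b` with both members in `p`);
(2) `{A_{i_1},…,A_{i_{k-1}}, A'_{i_k},…,A'_{i_n}}` with `1 ≤ k ≤ n + 1`, i.e. every element
of `s` is smaller than every element of `p`, subject to the same two weight conditions;
(3) `{O, A_{i_1},…,A_{i_n}}` with `w_{A_{i_r}A_{i_s}} ≤ α` for all `r < s`. -/
theorem isVR_hatGwwt_iff
    (N : ℕ) (w wt : Fin N → Fin N → ℝ≥0∞)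
    (hw : ∀ i j, w i j = w j i) (hwt : ∀ i j, wt i j = wt j i)
    (α : ℝ) (hα : 0 ≤ α) (σ : Finset (VH N)) :
    IsVR (dhat w wt) α σ ↔
      -- form (1)
      (∃ s p : Finset (Fin N), s.Nonempty ∧ p.Nonempty ∧
        (∃ m, m ∈ s ∧ m ∈ p ∧ (∀ a ∈ s, a ≤ m) ∧ (∀ b ∈ p, m ≤ b)) ∧
        σ = unp s ∪ prm p ∧
        (∀ a ∈ s, ∀ b ∈ s ∪ p, a < b → w a b ≤ ENNReal.ofReal α) ∧
        (∀ a ∈ p, ∀ b ∈ p, a < b → min (w a b) (wt a b) ≤ ENNReal.ofReal α)) ∨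
      -- form (2)
      (∃ s p : Finset (Fin N), (s ∪ p).Nonempty ∧
        (∀ a ∈ s, ∀ b ∈ p, a < b) ∧
        σ = unp s ∪ prm p ∧
        (∀ a ∈ s, ∀ b ∈ s ∪ p, a < b → w a b ≤ ENNReal.ofReal α) ∧
        (∀ a ∈ p, ∀ b ∈ p, a < b → min (w a b) (wt a b) ≤ ENNReal.ofReal α)) ∨
      -- form (3)
      (∃ s : Finset (Fin N), σ = insert vO (unp s) ∧
        (∀ a ∈ s, ∀ b ∈ s, a < b → w a b ≤ ENNReal.ofReal α)) := by
  have htop : ¬ ((⊤ : ℝ≥0∞) ≤ ENNReal.ofReal α) :=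
    fun h => ENNReal.ofReal_ne_top (top_le_iff.1 h)
  constructor
  · rintro ⟨hne, hd⟩
    by_cases hO : vO ∈ σ
    · right; right
      have hp : ∀ i : Fin N, Sum.inl (Sum.inr i) ∉ σ := by
        intro i hi
        have h2 := hd vO hO _ hi (by simp [vO])
        rw [dhat_OP] at h2
        exact htop h2
      refine ⟨uIdx σ, ?_, ?_⟩
      · ext x
        rcases x with (i | i) | u
        · simp [uIdx, unp, vO]
        · simp [unp, vO, hp i]
        · cases u
          simp only [vO, unp, Finset.mem_insert, Finset.mem_image]
          exact iff_of_true hO (Or.inl trivial)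
      · intro a ha b hb hab
        have := hd _ (by simpa [uIdx] using ha) _ (by simpa [uIdx] using hb)
          (by simp [hab.ne])
        rwa [dhat_AA] at this
    · have hmemu : ∀ i : Fin N, Sum.inl (Sum.inl i) ∈ σ ↔ i ∈ uIdx σ := by
        simp [uIdx]
      have hmemp : ∀ i : Fin N, Sum.inl (Sum.inr i) ∈ σ ↔ i ∈ pIdx σ := by
        simp [pIdx]
      have hσ : σ = unp (uIdx σ) ∪ prm (pIdx σ) := by
        ext x
        rcases x with (i | i) | u
        · simp [unp, prm, uIdx, pIdx]
        · simp [unp, prm, uIdx, pIdx]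
        · cases u
          simp only [Finset.mem_union, unp, prm, Finset.mem_image]
          constructor
          · intro h; exact absurd h hO
          · rintro (⟨i, _, h⟩ | ⟨i, _, h⟩) <;> exact absurd h (by simp)
      have hle : ∀ a ∈ uIdx σ, ∀ b ∈ pIdx σ, a ≤ b := by
        intro a ha b hb
        by_contra h
        push_neg at h
        have hd' := hd _ ((hmemu a).2 ha) _ ((hmemp b).2 hb) (by simp)
        rw [dhat_AP, if_neg (not_lt.2 h.le), if_neg h.ne'] at hd'
        exact htop hd'
      have h1 : ∀ a ∈ uIdx σ, ∀ b ∈ uIdx σ ∪ pIdx σ, a < b →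
          w a b ≤ ENNReal.ofReal α := by
        intro a ha b hb hab
        rcases Finset.mem_union.1 hb with h | h
        · have := hd _ ((hmemu a).2 ha) _ ((hmemu b).2 h) (by simp [hab.ne])
          rwa [dhat_AA] at this
        · have := hd _ ((hmemu a).2 ha) _ ((hmemp b).2 h) (by simp)
          rwa [dhat_AP, if_pos hab] at this
      have h2 : ∀ a ∈ pIdx σ, ∀ b ∈ pIdx σ, a < b →
          min (w a b) (wt a b) ≤ ENNReal.ofReal α := by
        intro a ha b hb hab
        have := hd _ ((hmemp a).2 ha) _ ((hmemp b).2 hb) (by simp [hab.ne])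
        rwa [dhat_PP, if_neg hab.ne] at this
      by_cases hip : (uIdx σ ∩ pIdx σ).Nonempty
      · left
        obtain ⟨m, hm⟩ := hip
        obtain ⟨hms, hmp⟩ := Finset.mem_inter.1 hm
        exact ⟨uIdx σ, pIdx σ, ⟨m, hms⟩, ⟨m, hmp⟩,
          ⟨m, hms, hmp, fun a ha => hle a ha m hmp, fun b hb => hle m hms b hb⟩,
          hσ, h1, h2⟩
      · right; left
        refine ⟨uIdx σ, pIdx σ, ?_, ?_, hσ, h1, h2⟩
        · obtain ⟨x, hx⟩ := hne
          rcases x with (i | i) | u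
          · exact ⟨i, Finset.mem_union_left _ ((hmemu i).1 hx)⟩
          · exact ⟨i, Finset.mem_union_right _ ((hmemp i).1 hx)⟩
          · cases u; exact absurd hx hO
        · intro a ha b hb
          refine (hle a ha b hb).lt_of_ne fun h => hip ⟨a, Finset.mem_inter.2 ⟨ha, h ▸ hb⟩⟩
  · rintro (⟨s, p, _, _, ⟨m, hms, hmp, hsm, hmp2⟩, rfl, h1, h2⟩ |
      ⟨s, p, hne, hlt, rfl, h1, h2⟩ | ⟨s, rfl, h⟩)
    · exact isVR_aux hw hwt ⟨m, Finset.mem_union_left _ hms⟩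
        (fun a ha b hb => (hsm a ha).trans (hmp2 b hb)) h1 h2
    · exact isVR_aux hw hwt hne (fun a ha b hb => (hlt a ha b hb).le) h1 h2
    · refine ⟨⟨vO, Finset.mem_insert_self _ _⟩, ?_⟩
      intro x hx y hy hxy
      simp only [Finset.mem_insert, unp, Finset.mem_image] at hx hy
      rcases hx with rfl | ⟨i, hi, rfl⟩ <;> rcases hy with rfl | ⟨j, hj, rfl⟩
      · exact absurd rfl hxy
      · exact zero_le
      · exact zero_le
      · have hij : i ≠ j := by simpa using hxy
        rw [dhat_AA]
        rcases hij.lt_or_gt with hlt | hlt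
        · exact h i hi j hj hlt
        · rw [hw]; exact h j hj i hi hlt

end RTD
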